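/- Explicit transformation of the spherical Green function under Möbius maps: G_ĝ(ψ(x), ψ(y)) = G_ĝ(x, y) − (1/4)(φ(x) + φ(y)), where e^{φ} = ĝ_ψ/ĝ with ĝ_ψ(z) = |ψ'(z)|² ĝ(ψ(z)), and G_ĝ(x,y) = ln(1/|x−y|) − (1/4)(ln ĝ(x) + ln ĝ(y)) + ln 2 − 1/2. -/

import Mathlib

/-- The round metric density `ĝ(z) = 4/(1+|z|²)²` on the plane. -/
noncomputable def roundMetric (z : ℂ) : ℝ := 4 / (1 + ‖z‖^2)^2

/-- The Green function for the round metric: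
`G_ĝ(x,y) = ln(1/|x−y|) − (1/4)(ln ĝ(x) + ln ĝ(y)) + ln 2 − 1/2`. -/
noncomputable def greenRound (x y : ℂ) : ℝ :=
  Real.log (1 / ‖x - y‖) - (1/4) * (Real.log (roundMetric x) + Real.log (roundMetric y))
    + Real.log 2 - 1/2

/-- Explicit transformation of the spherical Green function under Möbius maps:
`G_ĝ(ψ(x), ψ(y)) = G_ĝ(x, y) − (1/4)(φ(x) + φ(y))`, where `e^φ = ĝ_ψ/ĝ` with
`ĝ_ψ(z) = |ψ'(z)|² ĝ(ψ(z))`. -/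
theorem statement13 (a b c d : ℂ) (habcd : a * d - b * c = 1)
    (ψ : ℂ → ℂ) (hψ : ∀ z, ψ z = (a * z + b) / (c * z + d))
    (φ : ℂ → ℝ)
    (hφ : ∀ z, Real.exp (φ z) = (‖deriv ψ z‖^2 * roundMetric (ψ z)) / roundMetric z)
    (x y : ℂ) (hx : c * x + d ≠ 0) (hy : c * y + d ≠ 0) (hxy : x ≠ y) :
    greenRound (ψ x) (ψ y) = greenRound x y - (1/4) * (φ x + φ y) := by
  have gpos : ∀ z : ℂ, 0 < roundMetric z := fun z => by
    unfold roundMetric; positivity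
  have hder : ∀ z : ℂ, c*z+d ≠ 0 → deriv ψ z = 1/(c*z+d)^2 := by
    intro z hz
    have hψfun : ψ = fun w => (a*w+b)/(c*w+d) := funext hψ
    rw [hψfun]
    have h1 : HasDerivAt (fun w : ℂ => a*w+b) a z := by
      simpa using ((hasDerivAt_id z).const_mul a).add_const b
    have h2 : HasDerivAt (fun w : ℂ => c*w+d) c z := by
      simpa using ((hasDerivAt_id z).const_mul c).add_const d
    rw [show (fun w => (a*w+b)/(c*w+d)) = (fun w => a*w+b) / (fun w => c*w+d) from rfl,
      (h1.div h2 hz).deriv]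
    field_simp
    linear_combination habcd
  have hnum : ψ x - ψ y = (x - y)/((c*x+d)*(c*y+d)) := by
    rw [hψ, hψ]
    rw [div_sub_div _ _ hx hy, div_eq_div_iff (mul_ne_zero hx hy) (mul_ne_zero hx hy)]
    linear_combination (x - y) * ((c*x+d)*(c*y+d)) * habcd
  have hA : (0:ℝ) < ‖c*x+d‖ := norm_pos_iff.mpr hx
  have hB : (0:ℝ) < ‖c*y+d‖ := norm_pos_iff.mpr hy
  have hxy' : (0:ℝ) < ‖x - y‖ := norm_pos_iff.mpr (sub_ne_zero.mpr hxy)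
  have hnorm : ‖ψ x - ψ y‖ = ‖x - y‖ / (‖c*x+d‖ * ‖c*y+d‖) := by
    rw [hnum, norm_div, norm_mul]
  have hφ' : ∀ z : ℂ, c*z+d ≠ 0 →
      φ z = -(4 * Real.log ‖c*z+d‖) + Real.log (roundMetric (ψ z)) - Real.log (roundMetric z) := by
    intro z hz
    have hzpos : (0:ℝ) < ‖c*z+d‖ := norm_pos_iff.mpr hz
    have hd : ‖deriv ψ z‖ = 1/‖c*z+d‖^2 := by
      rw [hder z hz, norm_div, norm_pow, norm_one]
    have hlog : φ z = Real.log (‖deriv ψ z‖^2 * roundMetric (ψ z) / roundMetric z) := by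
      rw [← hφ z, Real.log_exp]
    rw [hlog, hd]
    have h1 : ((1:ℝ)/‖c*z+d‖^2)^2 ≠ 0 := by
      apply pow_ne_zero; rw [one_div]; exact inv_ne_zero (pow_ne_zero 2 hzpos.ne')
    have h2 : ((1:ℝ)/‖c*z+d‖^2)^2 * roundMetric (ψ z) ≠ 0 := mul_ne_zero h1 (gpos (ψ z)).ne'
    rw [Real.log_div h2 (gpos z).ne', Real.log_mul h1 (gpos (ψ z)).ne']
    rw [one_div, inv_pow, Real.log_inv, ← pow_mul, Real.log_pow]
    push_cast
    ring
  have hlogdist : Real.log (1/‖ψ x - ψ y‖)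
      = Real.log (1/‖x - y‖) + Real.log ‖c*x+d‖ + Real.log ‖c*y+d‖ := by
    rw [hnorm, one_div, Real.log_inv, Real.log_div hxy'.ne' (by positivity),
        Real.log_mul hA.ne' hB.ne', one_div, Real.log_inv]
    ring
  unfold greenRound
  rw [hlogdist, hφ' x hx, hφ' y hy]
  ring
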